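/- Let B ∈ ℤ^{n×k} be a matrix with integer entries whose columns B_1,...,B_k form a ℤ-basis of ker(A) ∩ ℤ^n for an integer matrix A ∈ ℤ^{(d+1)×n}, and let ε ∈ ℤ^n. Suppose y ∈ ℝ^{k+1} satisfies (−1)^{ε_i}⟨P_i, y⟩ > 0 for all i and ∏_{i=1}^n ⟨P_i,y⟩^{b_{ij}} = 1 for all j. Then Σ_{i=1}^n ε_i b_i ≡ 0 (mod 2) for every b ∈ ker(A) ∩ ℤ^n; equivalently, the reduction [ε]_2 lies in the left kernel of [B]_2 over ℤ/2ℤ. -/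
import Mathlib

lemma zpow_finset_sum₀ {M₀ : Type*} [CommGroupWithZero M₀] {ι : Type*} {a : M₀}
    (ha : a ≠ 0) (s : Finset ι) (f : ι → ℤ) :
    a ^ (∑ i ∈ s, f i) = ∏ i ∈ s, a ^ f i := by
  induction s using Finset.cons_induction with
  | empty => simp
  | cons i s hi ih => simp [Finset.sum_cons, Finset.prod_cons, zpow_add₀ ha, ih]

/-- if the columns of `B ∈ ℤ^{n×k}` form a ℤ-basis of `ker A ∩ ℤ^n`,
`y` lies in the chamber `𝒞^ν_ε` (so `(−1)^{ε_i}⟨P_i,y⟩ > 0` for all `i`) and `y`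
solves the Gale system, then `Σ_i ε_i b_i` is even for every `b ∈ ker A ∩ ℤ^n`,
i.e. `[ε]₂` lies in the left kernel of `[B]₂`. -/
theorem gale_solution_parity_condition
    (d k : ℕ) (A : Matrix (Fin (d + 1)) (Fin (d + k + 1)) ℤ)
    (B : Matrix (Fin (d + k + 1)) (Fin k) ℤ)
    (hBker : ∀ j, A.mulVec (fun i => B i j) = 0)
    (hBindep : LinearIndependent ℤ (fun j => (fun i => B i j)))
    (hBgen : ∀ b : Fin (d + k + 1) → ℤ, A.mulVec b = 0 →
      ∃ c : Fin k → ℤ, ∀ i, b i = ∑ j, c j * B i j)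
    (C : Matrix (Fin d) (Fin (d + k + 1)) ℝ) (hCrank : C.rank = d)
    (D : Matrix (Fin (d + k + 1)) (Fin (k + 1)) ℝ)
    (hCD : C * D = 0) (hDrank : D.rank = k + 1)
    (ε : Fin (d + k + 1) → ℤ) (y : Fin (k + 1) → ℝ)
    (hsgn : ∀ i, 0 < (-1 : ℝ) ^ ε i * D.mulVec y i)
    (hprod : ∀ j, ∏ i, (D.mulVec y i) ^ B i j = 1) :
    ∀ b : Fin (d + k + 1) → ℤ, A.mulVec b = 0 →
      (2 : ℤ) ∣ ∑ i, ε i * b i := by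
  intro b hb
  set x : Fin (d + k + 1) → ℝ := D.mulVec y with hx
  have hxne : ∀ i, x i ≠ 0 := by
    intro i h
    have := hsgn i
    rw [h, mul_zero] at this
    exact lt_irrefl _ this
  obtain ⟨c, hc⟩ := hBgen b hb
  -- product over b is 1
  have hprodb : ∏ i, x i ^ b i = 1 := by
    have : ∀ i, x i ^ b i = ∏ j, (x i ^ B i j) ^ c j := by
      intro i
      rw [hc i]
      rw [show (∑ j, c j * B i j) = ∑ j, B i j * c j by
        simp [mul_comm]]
      rw [zpow_finset_sum₀ (hxne i)]
      refine Finset.prod_congr rfl fun j _ => ?_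
      rw [zpow_mul]
    calc ∏ i, x i ^ b i = ∏ i, ∏ j, (x i ^ B i j) ^ c j := by
          exact Finset.prod_congr rfl fun i _ => this i
      _ = ∏ j, (∏ i, x i ^ B i j) ^ c j := by
          rw [Finset.prod_comm]
          exact Finset.prod_congr rfl fun j _ => Finset.prod_zpow _ _ _
      _ = 1 := by simp [hprod]
  -- decompose signs
  have hr : ∀ i, x i = (-1 : ℝ) ^ ε i * ((-1 : ℝ) ^ ε i * x i) := by
    intro i
    rw [← mul_assoc, ← zpow_add₀ (by norm_num : (-1:ℝ) ≠ 0)]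
    rw [← two_mul, zpow_mul]
    norm_num
  have hsplit : ∏ i, x i ^ b i
      = (-1 : ℝ) ^ (∑ i, ε i * b i) * ∏ i, ((-1 : ℝ) ^ ε i * x i) ^ b i := by
    rw [zpow_finset_sum₀ (by norm_num : (-1:ℝ) ≠ 0), ← Finset.prod_mul_distrib]
    refine Finset.prod_congr rfl fun i _ => ?_
    conv_lhs => rw [hr i]
    rw [mul_zpow, zpow_mul]
  have hpos : 0 < ∏ i, ((-1 : ℝ) ^ ε i * x i) ^ b i :=
    Finset.prod_pos fun i _ => zpow_pos (hsgn i) _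
  have hsgnpow : (0 : ℝ) < (-1 : ℝ) ^ (∑ i, ε i * b i) := by
    rw [hsplit] at hprodb
    nlinarith [hprodb, hpos]
  -- conclude evenness
  rcases Int.even_or_odd (∑ i, ε i * b i) with he | ho
  · exact he.two_dvd
  · exfalso
    rw [ho.neg_one_zpow] at hsgnpow
    linarith
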